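/- Let T = (S,Σ,κ) be an STS and B ∈ Σ with avoid-set B̃. Then: (i) for every probability measure μ on S with μ(B̃) = 1, Prob_μ(F B) = 0; and (ii) for every probability measure μ on S with μ(S ∖ B̃) > 0, Prob_μ(F B) > 0. -/

import Mathlib

open MeasureTheory ProbabilityTheory ENNReal Filter Topology

namespace STS

variable {S : Type*} [MeasurableSpace S]

/-- Probability of the cylinder `Cyl(A 0, …, A n)` for the Markov chain with kernel `κ`
and initial distribution `μ`. -/
noncomputable def cylProb (κ : Kernel S S) : ℕ → Measure S → (ℕ → Set S) → ℝ≥0∞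
  | 0, μ, A => μ (A 0)
  | n + 1, μ, A => ∫⁻ s in A 0, cylProb κ n (κ s) (fun i => A (i + 1)) ∂μ

/-- `P` assigns to each initial (probability) distribution the path measure (on `ℕ → S`,
with the product σ-algebra) of the time-homogeneous Markov chain with transition kernel `κ`,
as given by the Ionescu–Tulcea construction: it is the unique probability measure giving
cylinders their prescribed probabilities. -/
def IsPathMeasure (κ : Kernel S S) (P : Measure S → Measure (ℕ → S)) : Prop :=
  ∀ μ : Measure S, IsProbabilityMeasure μ →
    IsProbabilityMeasure (P μ) ∧
    ∀ (n : ℕ) (A : ℕ → Set S), (∀ i, MeasurableSet (A i)) →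
      P μ {ρ | ∀ i ≤ n, ρ i ∈ A i} = cylProb κ n μ A

/-- The path event `F B`: eventually reach `B`. -/
def evF (B : Set S) : Set (ℕ → S) := {ρ | ∃ k, ρ k ∈ B}

/-- The path event `F≤n B`. -/
def evFle (n : ℕ) (B : Set S) : Set (ℕ → S) := {ρ | ∃ k ≤ n, ρ k ∈ B}

/-- The path event `F≥p B`. -/
def evFge (p : ℕ) (B : Set S) : Set (ℕ → S) := {ρ | ∃ k, p ≤ k ∧ ρ k ∈ B}

/-- The path event `GF B`: visit `B` infinitely often. -/
def evGF (B : Set S) : Set (ℕ → S) := {ρ | ∀ n, ∃ k, n ≤ k ∧ ρ k ∈ B}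

/-- The path event `FG B`: eventually stay in `B` forever. -/
def evFG (B : Set S) : Set (ℕ → S) := {ρ | ∃ n, ∀ k, n ≤ k → ρ k ∈ B}

/-- The until event `B' U B`. -/
def evU (B' B : Set S) : Set (ℕ → S) := {ρ | ∃ k, ρ k ∈ B ∧ ∀ j < k, ρ j ∈ B'}

/-- The bounded until event `B' U≤n B`. -/
def evUle (n : ℕ) (B' B : Set S) : Set (ℕ → S) := {ρ | ∃ k ≤ n, ρ k ∈ B ∧ ∀ j < k, ρ j ∈ B'}

/-- The avoid-set `B̃` of `B`: states from which `B` is reached with probability `0`. -/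
def avoid (P : Measure S → Measure (ℕ → S)) (B : Set S) : Set S :=
  {s | P (Measure.dirac s) (evF B) = 0}

/-- `T` is decisive w.r.t. `B` from `μ`. -/
def Decisive (P : Measure S → Measure (ℕ → S)) (μ : Measure S) (B : Set S) : Prop :=
  P μ (evF B ∪ evF (avoid P B)) = 1

/-- `T` is strongly decisive w.r.t. `B` from `μ`. -/
def StronglyDecisive (P : Measure S → Measure (ℕ → S)) (μ : Measure S) (B : Set S) : Prop :=
  P μ (evGF B ∪ evF (avoid P B)) = 1

/-- `T` is persistently decisive w.r.t. `B` from `μ`. -/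
def PersistentlyDecisive (P : Measure S → Measure (ℕ → S)) (μ : Measure S) (B : Set S) : Prop :=
  ∀ p : ℕ, P μ (evFge p B ∪ evFge p (avoid P B)) = 1

/-- `PreProb(B)`: measurable sets `B'` from which `B` is reached in one step with positive
probability, whatever the initial distribution concentrated on `B'`. -/
def PreProb (P : Measure S → Measure (ℕ → S)) (B : Set S) : Set (Set S) :=
  {B' | MeasurableSet B' ∧ ∀ μ' : Measure S, IsProbabilityMeasure μ' → μ' B' = 1 →
    0 < P μ' {ρ | ρ 0 ∈ B' ∧ ρ 1 ∈ B}}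

/-- `T` is fair w.r.t. `B` from `μ`. -/
def Fair (P : Measure S → Measure (ℕ → S)) (μ : Measure S) (B : Set S) : Prop :=
  ∀ B' ∈ PreProb P B, 0 < P μ (evGF B') →
    P μ (evGF B ∩ evGF B') = P μ (evGF B')

/-- The one-step measure transformer `Ω_T`. -/
noncomputable def Omega (κ : Kernel S S) (μ : Measure S) : Measure S :=
  μ.bind (fun s => κ s)

/-- Two measures are qualitatively equivalent if they have the same null (measurable) sets. -/
def QualEquiv {T : Type*} [MeasurableSpace T] (μ ν : Measure T) : Prop :=
  ∀ A : Set T, MeasurableSet A → (μ A = 0 ↔ ν A = 0)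

/-- `T₂ = (S₂,κ₂)` is an `α`-abstraction of `T₁ = (S₁,κ₁)`. -/
def IsAbstraction {S₁ S₂ : Type*} [MeasurableSpace S₁] [MeasurableSpace S₂]
    (κ₁ : Kernel S₁ S₁) (κ₂ : Kernel S₂ S₂) (α : S₁ → S₂) : Prop :=
  ∀ μ : Measure S₁, IsProbabilityMeasure μ →
    QualEquiv (Measure.map α (Omega κ₁ μ)) (Omega κ₂ (Measure.map α μ))


noncomputable def fAvoid (κ : Kernel S S) (B : Set S) : ℕ → S → ℝ≥0∞
  | 0 => Bᶜ.indicator 1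
  | n + 1 => Bᶜ.indicator (fun s => ∫⁻ t, fAvoid κ B n t ∂(κ s))

lemma measurable_fAvoid (κ : Kernel S S) [IsMarkovKernel κ] (B : Set S)
    (hB : MeasurableSet B) (n : ℕ) : Measurable (fAvoid κ B n) := by
  induction n with
  | zero => exact (measurable_one.indicator hB.compl)
  | succ n ih => exact (Measurable.lintegral_kernel ih).indicator hB.compl

lemma fAvoid_le_one (κ : Kernel S S) [IsMarkovKernel κ] (B : Set S) (n : ℕ) (s : S) :
    fAvoid κ B n s ≤ 1 := by
  induction n generalizing s with
  | zero =>
    classical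
    simp only [fAvoid, Set.indicator]
    split <;> simp
  | succ n ih =>
    classical
    simp only [fAvoid, Set.indicator]
    split
    · calc ∫⁻ t, fAvoid κ B n t ∂(κ s) ≤ ∫⁻ _, 1 ∂(κ s) := lintegral_mono ih
        _ = 1 := by simp
    · simp

lemma fAvoid_antitone (κ : Kernel S S) [IsMarkovKernel κ] (B : Set S) :
    ∀ n s, fAvoid κ B (n + 1) s ≤ fAvoid κ B n s := by
  intro n
  induction n with
  | zero =>
    intro s
    classical
    simp only [fAvoid, Set.indicator]
    split
    · calc ∫⁻ t, fAvoid κ B 0 t ∂(κ s) ≤ ∫⁻ _, 1 ∂(κ s) :=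
          lintegral_mono (fAvoid_le_one κ B 0)
        _ = 1 := by simp
    · exact le_rfl
  | succ n ih =>
    intro s
    simp only [fAvoid]
    exact Set.indicator_le_indicator (lintegral_mono ih)

lemma cylProb_const_compl (κ : Kernel S S) [IsMarkovKernel κ] (B : Set S)
    (hB : MeasurableSet B) :
    ∀ n (μ : Measure S), cylProb κ n μ (fun _ => Bᶜ) = ∫⁻ s, fAvoid κ B n s ∂μ := by
  intro n
  induction n with
  | zero => intro μ; simp [cylProb, fAvoid, lintegral_indicator hB.compl]
  | succ n ih =>
    intro μ
    have : cylProb κ (n+1) μ (fun _ => Bᶜ)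
        = ∫⁻ s in Bᶜ, cylProb κ n (κ s) (fun _ => Bᶜ) ∂μ := rfl
    rw [this]
    simp only [ih, fAvoid, lintegral_indicator hB.compl]

noncomputable def gAvoid (κ : Kernel S S) (B : Set S) (s : S) : ℝ≥0∞ :=
  ⨅ n, fAvoid κ B n s

lemma measurable_gAvoid (κ : Kernel S S) [IsMarkovKernel κ] (B : Set S)
    (hB : MeasurableSet B) : Measurable (gAvoid κ B) :=
  Measurable.iInf (measurable_fAvoid κ B hB)

lemma gAvoid_le_one (κ : Kernel S S) [IsMarkovKernel κ] (B : Set S) (s : S) :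
    gAvoid κ B s ≤ 1 :=
  (iInf_le _ 0).trans (fAvoid_le_one κ B 0 s)

lemma measurableSet_evFle (n : ℕ) (B : Set S) (hB : MeasurableSet B) :
    MeasurableSet (evFle n B) := by
  have : evFle n B = ⋃ k ∈ Set.Iic n, (fun ρ : ℕ → S => ρ k) ⁻¹' B := by
    ext ρ; simp [evFle]
  rw [this]
  exact MeasurableSet.biUnion (Set.to_countable _)
    (fun k _ => (measurable_pi_apply k) hB)

lemma P_evF (κ : Kernel S S) [IsMarkovKernel κ]
    (P : Measure S → Measure (ℕ → S)) (hP : IsPathMeasure κ P)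
    (B : Set S) (hB : MeasurableSet B)
    (μ : Measure S) (hμ : IsProbabilityMeasure μ) :
    P μ (evF B) = 1 - ∫⁻ s, gAvoid κ B s ∂μ := by
  obtain ⟨hPprob, hcyl⟩ := hP μ hμ
  have hFle : ∀ n, P μ (evFle n B) = 1 - ∫⁻ s, fAvoid κ B n s ∂μ := by
    intro n
    have h1 : P μ {ρ | ∀ i ≤ n, ρ i ∈ Bᶜ} = ∫⁻ s, fAvoid κ B n s ∂μ := by
      rw [hcyl n (fun _ => Bᶜ) (fun _ => hB.compl), cylProb_const_compl κ B hB]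
    have h2 : {ρ : ℕ → S | ∀ i ≤ n, ρ i ∈ Bᶜ} = (evFle n B)ᶜ := by
      ext ρ; simp [evFle]
    rw [h2] at h1
    rw [prob_compl_eq_one_sub (measurableSet_evFle n B hB)] at h1
    rw [← h1, ENNReal.sub_sub_cancel one_ne_top prob_le_one]
  have hUnion : evF B = ⋃ n, evFle n B := by
    ext ρ
    constructor
    · rintro ⟨k, hk⟩; exact Set.mem_iUnion.2 ⟨k, k, le_rfl, hk⟩
    · rintro h
      obtain ⟨n, k, _, hk⟩ := Set.mem_iUnion.1 h
      exact ⟨k, hk⟩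
  have hmono : Monotone (fun n => evFle n B) := by
    intro m n hmn ρ ⟨k, hk, hkB⟩
    exact ⟨k, hk.trans hmn, hkB⟩
  rw [hUnion, hmono.directed_le.measure_iUnion]
  have hiInf : ∫⁻ s, gAvoid κ B s ∂μ = ⨅ n, ∫⁻ s, fAvoid κ B n s ∂μ := by
    unfold gAvoid
    exact lintegral_iInf (measurable_fAvoid κ B hB)
      (antitone_nat_of_succ_le (fun n s => fAvoid_antitone κ B n s))
      (by
        refine ne_top_of_le_ne_top one_ne_top ?_
        calc ∫⁻ s, fAvoid κ B 0 s ∂μ ≤ ∫⁻ _, 1 ∂μ := lintegral_mono (fAvoid_le_one κ B 0)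
          _ = 1 := by simp)
  rw [hiInf, ENNReal.sub_iInf]
  exact iSup_congr hFle

lemma avoid_eq (κ : Kernel S S) [IsMarkovKernel κ]
    (P : Measure S → Measure (ℕ → S)) (hP : IsPathMeasure κ P)
    (B : Set S) (hB : MeasurableSet B) :
    avoid P B = {s | gAvoid κ B s = 1} := by
  ext s
  have hd : P (Measure.dirac s) (evF B) = 1 - gAvoid κ B s := by
    rw [P_evF κ P hP B hB _ inferInstance,
      lintegral_dirac' s (measurable_gAvoid κ B hB)]
  simp only [avoid, Set.mem_setOf_eq, hd]
  rw [tsub_eq_zero_iff_le]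
  exact ⟨fun h => le_antisymm (gAvoid_le_one κ B s) h, fun h => h.ge⟩


/-- properties of the avoid-set `B̃` of a measurable set `B` in an STS:
(i) if `μ(B̃) = 1` then `Prob_μ(F B) = 0`; (ii) if `μ(S ∖ B̃) > 0` then `Prob_μ(F B) > 0`. -/
theorem statement_0 {S : Type*} [MeasurableSpace S]
    (κ : Kernel S S) [IsMarkovKernel κ]
    (P : Measure S → Measure (ℕ → S)) (hP : IsPathMeasure κ P)
    (B : Set S) (hB : MeasurableSet B) :
    (∀ μ : Measure S, IsProbabilityMeasure μ → μ (avoid P B) = 1 → P μ (evF B) = 0) ∧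
    (∀ μ : Measure S, IsProbabilityMeasure μ → 0 < μ ((avoid P B)ᶜ) → 0 < P μ (evF B)) := by
  have hav := avoid_eq κ P hP B hB
  have hmA : MeasurableSet (avoid P B) := by
    rw [hav]; exact (measurable_gAvoid κ B hB) (measurableSet_singleton 1)
  constructor
  · intro μ hμ h1
    rw [P_evF κ P hP B hB μ hμ]
    have hnull : μ ((avoid P B)ᶜ) = 0 := by
      rw [prob_compl_eq_zero_iff hmA]; exact h1
    have hae : gAvoid κ B =ᵐ[μ] (fun _ => 1) := by
      rw [Filter.EventuallyEq, ae_iff]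
      refine measure_mono_null ?_ hnull
      intro s hs
      simp only [Set.mem_setOf_eq] at hs
      simp only [Set.mem_compl_iff, hav, Set.mem_setOf_eq]
      exact hs
    rw [lintegral_congr_ae hae]
    simp
  · intro μ hμ hpos
    rw [pos_iff_ne_zero]
    intro h0
    rw [P_evF κ P hP B hB μ hμ, tsub_eq_zero_iff_le] at h0
    have hle1 : ∫⁻ s, gAvoid κ B s ∂μ ≤ 1 := by
      calc ∫⁻ s, gAvoid κ B s ∂μ ≤ ∫⁻ _, 1 ∂μ := lintegral_mono (gAvoid_le_one κ B)
        _ = 1 := by simp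
    have heq : ∫⁻ s, gAvoid κ B s ∂μ = 1 := le_antisymm hle1 h0
    have hsub : ∫⁻ s, (1 - gAvoid κ B s) ∂μ = 0 := by
      rw [lintegral_sub (measurable_gAvoid κ B hB) (heq ▸ one_ne_top)
        (Filter.Eventually.of_forall (gAvoid_le_one κ B)), heq]
      simp
    have hae : ∀ᵐ s ∂μ, 1 - gAvoid κ B s = 0 :=
      (lintegral_eq_zero_iff (measurable_const.sub (measurable_gAvoid κ B hB))).1 hsub
    have hae1 : ∀ᵐ s ∂μ, s ∈ avoid P B := by
      filter_upwards [hae] with s hs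
      rw [hav]
      exact le_antisymm (gAvoid_le_one κ B s) (tsub_eq_zero_iff_le.1 hs)
    have hz : μ ((avoid P B)ᶜ) = 0 := by
      have := ae_iff.mp hae1
      simpa [Set.compl_def] using this
    exact absurd hz hpos.ne'


end STS
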